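/- An irrational number x ∈ (0,1) is a semi-Brjuno number if and only if B_0(x) < ∞. -/

import Mathlib

open Set Filter
open scoped ENNReal

/-- The by-excess continued fraction map `A_0(x) = ⌊1/x + 1⌋ − 1/x`. -/
noncomputable def exm (x : ℝ) : ℝ := ⌊1 / x + 1⌋ - 1 / x

/-- `bEx x n = b_{n+1} = ⌊1/A_0^n(x) + 1⌋`, the by-excess digits of `x`. -/
noncomputable def bEx (x : ℝ) (n : ℕ) : ℤ := ⌊1 / (exm^[n] x) + 1⌋

/-- `qstar x (n+1) = q*_n`, with `q*_{-1} = 0`, `q*_0 = 1` and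
`q*_n = b_n·q*_{n−1} − q*_{n−2}`. -/
noncomputable def qstar (x : ℝ) : ℕ → ℤ
  | 0 => 0
  | 1 => 1
  | n + 2 => bEx x n * qstar x (n + 1) - qstar x n

/-- The semi-Brjuno function `B_0(x) = ∑_{n≥0} β*_{n−1}·log(1/x_n) ∈ [0,∞]`
for `x ∈ (0,1)`, where `x_n = A_0^n(x)` and `β*_{n−1} = x_0⋯x_{n−1}`. -/
noncomputable def semiB (x : ℝ) : ℝ≥0∞ :=
  ∑' n : ℕ, ENNReal.ofReal ((∏ i ∈ Finset.range n, exm^[i] x) * Real.log (1 / (exm^[n] x)))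

/-- One step of the by-excess map preserves `(0,1)` and irrationality. -/
lemma exm_step {y : ℝ} (h0 : 0 < y) (h1 : y < 1) (hirr : Irrational y) :
    (0 < exm y ∧ exm y < 1) ∧ Irrational (exm y) := by
  have h1y : 1 < 1 / y := by rw [lt_div_iff₀ h0]; linarith
  have hinv : Irrational (1 / y) := by rw [one_div]; exact hirr.inv
  have hfl : ⌊1 / y + 1⌋ = ⌊1 / y⌋ + 1 := Int.floor_add_one _
  have hfr0 : 0 < Int.fract (1 / y) := by
    rw [Int.fract_pos]
    exact fun hc => (hinv.ne_int ⌊1 / y⌋) hc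
  have hfr1 : Int.fract (1 / y) < 1 := Int.fract_lt_one _
  have hexm : exm y = 1 - Int.fract (1 / y) := by
    rw [exm, hfl, Int.fract]
    push_cast
    ring
  refine ⟨⟨by rw [hexm]; linarith, by rw [hexm]; linarith⟩, ?_⟩
  rw [exm, hfl]
  exact hinv.intCast_sub (⌊1 / y⌋ + 1)

/-- Proposition 2.10: an irrational `x ∈ (0,1)` is a semi-Brjuno number, i.e.
`∑_{n≥0} log(b_{n+1} − 1)/q*_n < ∞`, if and only if `B_0(x) < ∞`. -/
theorem semiBrjuno_iff_semiB_finite (x : ℝ) (hirr : Irrational x)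
    (hx : x ∈ Set.Ioo (0 : ℝ) 1) :
    Summable (fun n : ℕ => Real.log ((bEx x n : ℝ) - 1) / (qstar x (n + 1) : ℝ)) ↔
      semiB x < ⊤ := by
  obtain ⟨hx0, hx1⟩ := hx
  -- orbit facts
  have hX : ∀ n, (0 < exm^[n] x ∧ exm^[n] x < 1) ∧ Irrational (exm^[n] x) := by
    intro n
    induction n with
    | zero => exact ⟨⟨hx0, hx1⟩, hirr⟩
    | succ n ih =>
      rw [Function.iterate_succ_apply']
      exact exm_step ih.1.1 ih.1.2 ih.2
  have hX0 : ∀ n, 0 < exm^[n] x := fun n => (hX n).1.1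
  have hX1 : ∀ n, exm^[n] x < 1 := fun n => (hX n).1.2
  -- the basic relation `1/x_n = b_{n+1} - x_{n+1}`
  have hrel : ∀ n, 1 / exm^[n] x = (bEx x n : ℝ) - exm^[n + 1] x := by
    intro n
    rw [Function.iterate_succ_apply']
    simp only [exm, bEx]
    ring
  -- digits are at least 2
  have hb2i : ∀ n, (2 : ℤ) ≤ bEx x n := by
    intro n
    have h1y : 1 < 1 / exm^[n] x := by
      rw [lt_div_iff₀ (hX0 n)]; nlinarith [hX1 n]
    rw [bEx]
    exact Int.le_floor.mpr (by push_cast; linarith)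
  have hb2 : ∀ n, (2 : ℝ) ≤ (bEx x n : ℝ) := fun n => by exact_mod_cast hb2i n
  -- q* facts
  have hq : ∀ n, (qstar x n : ℝ) + 1 ≤ (qstar x (n + 1) : ℝ) ∧ 0 ≤ (qstar x n : ℝ) := by
    intro n
    induction n with
    | zero => norm_num [qstar]
    | succ n ih =>
      have hrec : (qstar x (n + 2) : ℝ)
          = (bEx x n : ℝ) * (qstar x (n + 1) : ℝ) - (qstar x n : ℝ) := by
        rw [show qstar x (n + 2) = bEx x n * qstar x (n + 1) - qstar x n from rfl]
        push_cast; ring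
      constructor
      · rw [hrec]; nlinarith [hb2 n, ih.1, ih.2]
      · linarith [ih.1, ih.2]
  have hq1pos : ∀ n, 0 < (qstar x (n + 1) : ℝ) := fun n => by linarith [(hq n).1, (hq n).2]
  -- β* facts
  have hP0 : ∀ n, 0 < ∏ i ∈ Finset.range n, exm^[i] x :=
    fun n => Finset.prod_pos fun i _ => hX0 i
  have hPsucc : ∀ n, ∏ i ∈ Finset.range (n + 1), exm^[i] x
      = (∏ i ∈ Finset.range n, exm^[i] x) * exm^[n] x :=
    fun n => Finset.prod_range_succ _ _
  -- key identity: β*_{n-1} (q*_n - q*_{n-1} x_n) = 1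
  have hkey : ∀ n, (∏ i ∈ Finset.range n, exm^[i] x)
      * ((qstar x (n + 1) : ℝ) - (qstar x n : ℝ) * exm^[n] x) = 1 := by
    intro n
    induction n with
    | zero => norm_num [qstar]
    | succ n ih =>
      have e1 : exm^[n] x * ((bEx x n : ℝ) - exm^[n + 1] x) = 1 := by
        rw [← hrel n]
        rw [mul_one_div]
        exact div_self (hX0 n).ne'
      have hrec : (qstar x (n + 2) : ℝ)
          = (bEx x n : ℝ) * (qstar x (n + 1) : ℝ) - (qstar x n : ℝ) := by
        rw [show qstar x (n + 2) = bEx x n * qstar x (n + 1) - qstar x n from rfl]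
        push_cast; ring
      rw [hPsucc n, hrec]
      linear_combination ((∏ i ∈ Finset.range n, exm^[i] x) * (qstar x (n + 1) : ℝ)) * e1 + ih
  -- lower bound β*_{n-1} ≥ 1/q*_n
  have hPlb : ∀ n, 1 / (qstar x (n + 1) : ℝ) ≤ ∏ i ∈ Finset.range n, exm^[i] x := by
    intro n
    rw [div_le_iff₀ (hq1pos n)]
    nlinarith [hkey n, mul_nonneg (mul_nonneg (hP0 n).le (hq n).2) (hX0 n).le]
  -- conditional upper bound β*_{n-1} ≤ 2/q*_n when x_n ≤ 1/2
  have hPub : ∀ n, exm^[n] x ≤ 1 / 2 →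
      (∏ i ∈ Finset.range n, exm^[i] x) ≤ 2 / (qstar x (n + 1) : ℝ) := by
    intro n hhalf
    rw [le_div_iff₀ (hq1pos n)]
    have hq01 : (qstar x n : ℝ) ≤ (qstar x (n + 1) : ℝ) := by linarith [(hq n).1]
    have h1 : (∏ i ∈ Finset.range n, exm^[i] x) * (qstar x n : ℝ) * exm^[n] x
        ≤ (∏ i ∈ Finset.range n, exm^[i] x) * (qstar x (n + 1) : ℝ) * (1 / 2) := by
      exact mul_le_mul (mul_le_mul_of_nonneg_left hq01 (hP0 n).le) hhalf (hX0 n).le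
        (mul_nonneg (hP0 n).le (hq1pos n).le)
    nlinarith [hkey n]
  -- log facts
  have hbX : ∀ n, (bEx x n : ℝ) - 1 < 1 / exm^[n] x := by
    intro n; rw [hrel n]; linarith [hX1 (n + 1)]
  have hXb : ∀ n, 1 / exm^[n] x < (bEx x n : ℝ) := by
    intro n; rw [hrel n]; linarith [hX0 (n + 1)]
  have hM0 : ∀ n, 0 ≤ Real.log ((bEx x n : ℝ) - 1) :=
    fun n => Real.log_nonneg (by linarith [hb2 n])
  have hML : ∀ n, Real.log ((bEx x n : ℝ) - 1) ≤ Real.log (1 / exm^[n] x) :=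
    fun n => Real.log_le_log (by linarith [hb2 n]) (hbX n).le
  have hL0 : ∀ n, 0 ≤ Real.log (1 / exm^[n] x) :=
    fun n => Real.log_nonneg (by linarith [hbX n, hb2 n])
  -- the remainder bound: log(1/x_n) - log(b_{n+1}-1) ≤ 2(1 - x_n)
  have hell : ∀ n, Real.log (1 / exm^[n] x) - Real.log ((bEx x n : ℝ) - 1)
      ≤ 2 * (1 - exm^[n] x) := by
    intro n
    rcases eq_or_lt_of_le (hb2i n) with hbeq | hbgt
    · -- b = 2
      have hbr : (bEx x n : ℝ) = 2 := by exact_mod_cast hbeq.symm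
      have hlog1 : Real.log ((bEx x n : ℝ) - 1) = 0 := by rw [hbr]; norm_num
      rw [hlog1]
      have h1 : 1 / exm^[n] x < 2 := by have := hXb n; rw [hbr] at this; exact this
      have h2 : 1 < 2 * exm^[n] x := by
        have h1' := h1
        rw [div_lt_iff₀ (hX0 n)] at h1'
        linarith
      have h3 : Real.log (1 / exm^[n] x) ≤ 1 / exm^[n] x - 1 :=
        Real.log_le_sub_one_of_pos (by have := hX0 n; positivity)
      have h4 : 1 / exm^[n] x - 1 ≤ 2 * (1 - exm^[n] x) := by
        rw [sub_le_iff_le_add, div_le_iff₀ (hX0 n)]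
        nlinarith [mul_nonneg (by linarith : (0:ℝ) ≤ 2 * exm^[n] x - 1)
          (by linarith [hX1 n] : (0:ℝ) ≤ 1 - exm^[n] x)]
      linarith
    · -- b ≥ 3
      have hb3 : (3 : ℝ) ≤ (bEx x n : ℝ) := by exact_mod_cast hbgt
      have hhalf : exm^[n] x < 1 / 2 := by
        have h2 : 2 < 1 / exm^[n] x := by linarith [hbX n]
        rw [lt_div_iff₀ (hX0 n)] at h2
        linarith
      have hbpos : (0 : ℝ) < (bEx x n : ℝ) - 1 := by linarith
      have hxinvpos : (0 : ℝ) < 1 / exm^[n] x := by have := hX0 n; positivity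
      rw [← Real.log_div (ne_of_gt hxinvpos) (ne_of_gt hbpos)]
      have hd : (1 / exm^[n] x) / ((bEx x n : ℝ) - 1) ≤ 2 := by
        rw [div_le_iff₀ hbpos]
        linarith [hXb n]
      calc Real.log ((1 / exm^[n] x) / ((bEx x n : ℝ) - 1))
          ≤ Real.log 2 := Real.log_le_log (div_pos hxinvpos hbpos) hd
        _ ≤ 1 := by linarith [Real.log_two_lt_d9]
        _ ≤ 2 * (1 - exm^[n] x) := by linarith
  -- term comparisons
  have hS0 : ∀ n, 0 ≤ Real.log ((bEx x n : ℝ) - 1) / (qstar x (n + 1) : ℝ) :=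
    fun n => div_nonneg (hM0 n) (hq1pos n).le
  have hSle : ∀ n, Real.log ((bEx x n : ℝ) - 1) / (qstar x (n + 1) : ℝ)
      ≤ (∏ i ∈ Finset.range n, exm^[i] x) * Real.log (1 / exm^[n] x) := by
    intro n
    calc Real.log ((bEx x n : ℝ) - 1) / (qstar x (n + 1) : ℝ)
        = Real.log ((bEx x n : ℝ) - 1) * (1 / (qstar x (n + 1) : ℝ)) := by ring
      _ ≤ Real.log ((bEx x n : ℝ) - 1) * (∏ i ∈ Finset.range n, exm^[i] x) :=
          mul_le_mul_of_nonneg_left (hPlb n) (hM0 n)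
      _ = (∏ i ∈ Finset.range n, exm^[i] x) * Real.log ((bEx x n : ℝ) - 1) := mul_comm _ _
      _ ≤ (∏ i ∈ Finset.range n, exm^[i] x) * Real.log (1 / exm^[n] x) :=
          mul_le_mul_of_nonneg_left (hML n) (hP0 n).le
  have hPM : ∀ n, (∏ i ∈ Finset.range n, exm^[i] x) * Real.log ((bEx x n : ℝ) - 1)
      ≤ 2 * (Real.log ((bEx x n : ℝ) - 1) / (qstar x (n + 1) : ℝ)) := by
    intro n
    rcases eq_or_lt_of_le (hb2i n) with hbeq | hbgt
    · have hbr : (bEx x n : ℝ) = 2 := by exact_mod_cast hbeq.symm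
      rw [hbr]
      norm_num
    · have hb3 : (3 : ℝ) ≤ (bEx x n : ℝ) := by exact_mod_cast hbgt
      have hhalf : exm^[n] x ≤ 1 / 2 := by
        have h2 : 2 < 1 / exm^[n] x := by linarith [hbX n]
        rw [lt_div_iff₀ (hX0 n)] at h2
        linarith
      calc (∏ i ∈ Finset.range n, exm^[i] x) * Real.log ((bEx x n : ℝ) - 1)
          ≤ (2 / (qstar x (n + 1) : ℝ)) * Real.log ((bEx x n : ℝ) - 1) :=
            mul_le_mul_of_nonneg_right (hPub n hhalf) (hM0 n)
        _ = 2 * (Real.log ((bEx x n : ℝ) - 1) / (qstar x (n + 1) : ℝ)) := by ring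
  have hTle : ∀ n, (∏ i ∈ Finset.range n, exm^[i] x) * Real.log (1 / exm^[n] x)
      ≤ 2 * (Real.log ((bEx x n : ℝ) - 1) / (qstar x (n + 1) : ℝ))
        + 2 * ((∏ i ∈ Finset.range n, exm^[i] x) - ∏ i ∈ Finset.range (n + 1), exm^[i] x) := by
    intro n
    have h1 := hPM n
    have h2 : (∏ i ∈ Finset.range n, exm^[i] x)
        * (Real.log (1 / exm^[n] x) - Real.log ((bEx x n : ℝ) - 1))
        ≤ (∏ i ∈ Finset.range n, exm^[i] x) * (2 * (1 - exm^[n] x)) :=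
      mul_le_mul_of_nonneg_left (hell n) (hP0 n).le
    rw [hPsucc n]
    nlinarith [h1, h2]
  -- telescoping sum is summable
  have htel : Summable (fun n => (∏ i ∈ Finset.range n, exm^[i] x)
      - ∏ i ∈ Finset.range (n + 1), exm^[i] x) := by
    apply summable_of_sum_range_le (c := 1)
    · intro n
      rw [hPsucc n]
      nlinarith [hP0 n, hX1 n]
    · intro n
      rw [Finset.sum_range_sub' (fun k => ∏ i ∈ Finset.range k, exm^[i] x)]
      simp only [Finset.range_zero, Finset.prod_empty]
      linarith [hP0 n]
  have hTnonneg : ∀ n, 0 ≤ (∏ i ∈ Finset.range n, exm^[i] x) * Real.log (1 / exm^[n] x) :=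
    fun n => mul_nonneg (hP0 n).le (hL0 n)
  constructor
  · intro hS
    have hTsum : Summable (fun n =>
        (∏ i ∈ Finset.range n, exm^[i] x) * Real.log (1 / exm^[n] x)) :=
      Summable.of_nonneg_of_le hTnonneg hTle ((hS.mul_left 2).add (htel.mul_left 2))
    rw [semiB, ← ENNReal.ofReal_tsum_of_nonneg hTnonneg hTsum]
    exact ENNReal.ofReal_lt_top
  · intro hB
    have hB' : (∑' n : ℕ, ENNReal.ofReal
        ((∏ i ∈ Finset.range n, exm^[i] x) * Real.log (1 / (exm^[n] x)))) ≠ ⊤ := by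
      rw [semiB] at hB
      exact hB.ne
    have hTsum : Summable (fun n =>
        (∏ i ∈ Finset.range n, exm^[i] x) * Real.log (1 / exm^[n] x)) := by
      have h := ENNReal.summable_toReal hB'
      exact h.congr fun n => ENNReal.toReal_ofReal (hTnonneg n)
    exact Summable.of_nonneg_of_le hS0 hSle hTsum
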